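/- Let σ = 0. Let x* > 0, B > 0, let p* : [0,x*] → (0,1] be continuous, and let V* : [0,x*] → [0,∞) be continuously differentiable with V*(x*) = B and r·V*(x) = H(x, (V*)'(x), p*(x)) for all x ∈ [0,x*]. Let u : [0,∞) → [0,1) be measurable, let x₀ ∈ [0,x*], and let x(·) be an absolutely continuous function with x(0) = x₀ satisfying ẋ(t) = ((λ+r)/p*(x(t)) − λ − μ)·x(t) − u(t)/p*(x(t)) and x(t) ∈ [0,x*] for all t < T_b, where T_b = inf{ t ≥ 0 : x(t) = x* } ∈ (0,+∞]. Then ∫₀^{T_b} e^{−rt} L(u(t)) dt + e^{−r T_b} B ≥ V*(x₀), where the term e^{−r T_b} B is taken to be 0 when T_b = +∞. -/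

import Mathlib

open Set Filter MeasureTheory
open scoped ENNReal

/-- The deterministic (σ = 0) Hamiltonian
`H(x,ξ,p) = inf_{ω ∈ [0,1)} { L(ω) − (ξ/p)·ω } + ((λ+r)/p − λ − μ)·x·ξ`. -/
noncomputable def Ham0 (L : ℝ → ℝ) (lam r mu x ξ p : ℝ) : ℝ :=
  sInf ((fun ω => L ω - ξ / p * ω) '' Set.Ico 0 1) +
    ((lam + r) / p - lam - mu) * x * ξ

theorem stmt_4
    (r mu lam : ℝ) (hmu : 0 ≤ mu) (hr : mu < r) (hlam : 0 ≤ lam)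
    (L : ℝ → ℝ)
    (hL : ContDiffOn ℝ 2 L (Set.Ico 0 1))
    (hL0 : L 0 = 0)
    (hL1 : ∀ u ∈ Set.Ico (0:ℝ) 1, 0 < deriv L u)
    (hL2 : ∀ u ∈ Set.Ico (0:ℝ) 1, 0 < deriv (deriv L) u)
    (hLtop : Filter.Tendsto L (nhdsWithin 1 (Set.Iio 1)) Filter.atTop)
    (xs B : ℝ) (hxs : 0 < xs) (hB : 0 < B)
    (pstar : ℝ → ℝ) (hpc : ContinuousOn pstar (Set.Icc 0 xs))
    (hpr : ∀ x ∈ Set.Icc (0:ℝ) xs, pstar x ∈ Set.Ioc (0:ℝ) 1)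
    (Vs : ℝ → ℝ)
    (hVpos : ∀ x ∈ Set.Icc (0:ℝ) xs, 0 ≤ Vs x)
    (hVc1 : ContDiffOn ℝ 1 Vs (Set.Icc 0 xs))
    (hVB : Vs xs = B)
    (hHJ : ∀ x ∈ Set.Icc (0:ℝ) xs, r * Vs x = Ham0 L lam r mu x (deriv Vs x) (pstar x))
    (u : ℝ → ℝ) (hu : Measurable u) (hur : ∀ t : ℝ, u t ∈ Set.Ico (0:ℝ) 1)
    (x0 : ℝ) (hx0 : x0 ∈ Set.Icc (0:ℝ) xs)
    (X : ℝ → ℝ) (hX0 : X 0 = x0)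
    (Tb : ℝ≥0∞) (hTb0 : 0 < Tb)
    (hTb : Tb = sInf {s : ℝ≥0∞ | ∃ t : ℝ, 0 ≤ t ∧ s = ENNReal.ofReal t ∧ X t = xs})
    (hdyn : ∀ t : ℝ, 0 ≤ t → ENNReal.ofReal t < Tb →
      HasDerivAt X (((lam + r) / pstar (X t) - lam - mu) * X t - u t / pstar (X t)) t ∧
        X t ∈ Set.Icc 0 xs) :
    (Tb ≠ ⊤ →
      ENNReal.ofReal (Vs x0) ≤
        (∫⁻ t in Set.Ioc (0:ℝ) Tb.toReal, ENNReal.ofReal (Real.exp (-r * t) * L (u t))) +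
          ENNReal.ofReal (Real.exp (-r * Tb.toReal) * B)) ∧
    (Tb = ⊤ →
      ENNReal.ofReal (Vs x0) ≤
        ∫⁻ t in Set.Ioi (0:ℝ), ENNReal.ofReal (Real.exp (-r * t) * L (u t))) := by
  classical
  have hrpos : 0 < r := lt_of_le_of_lt hmu hr
  -- L is nonnegative on [0,1)
  have hLnn : ∀ ω ∈ Set.Ico (0:ℝ) 1, 0 ≤ L ω := by
    have hmono : StrictMonoOn L (Set.Ico 0 1) := by
      refine strictMonoOn_of_deriv_pos (convex_Ico 0 1) hL.continuousOn ?_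
      intro x hx
      rw [interior_Ico] at hx
      exact hL1 x ⟨hx.1.le, hx.2⟩
    intro ω hω
    rcases eq_or_lt_of_le hω.1 with h | h
    · rw [← h, hL0]
    · have := hmono ⟨le_refl (0:ℝ), one_pos⟩ hω h
      rw [hL0] at this; exact this.le
  have hBdd : ∀ c : ℝ, BddBelow ((fun ω => L ω - c * ω) '' Set.Ico 0 1) := by
    intro c
    refine ⟨-|c|, ?_⟩
    rintro y ⟨ω, hω, rfl⟩
    have h1 : 0 ≤ L ω := hLnn ω hω
    have h2 : |c * ω| ≤ |c| := by
      rw [abs_mul]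
      calc |c| * |ω| ≤ |c| * 1 := by
            refine mul_le_mul_of_nonneg_left ?_ (abs_nonneg c)
            rw [abs_of_nonneg hω.1]; exact hω.2.le
        _ = |c| := mul_one _
    have h3 := (abs_le.mp h2).2
    simp only
    linarith
  have hsInf0 : ∀ c : ℝ, sInf ((fun ω => L ω - c * ω) '' Set.Ico 0 1) ≤ 0 := by
    intro c
    have hm : (0:ℝ) ∈ (fun ω => L ω - c * ω) '' Set.Ico 0 1 :=
      ⟨0, ⟨le_refl 0, one_pos⟩, by simp [hL0]⟩
    exact csInf_le (hBdd c) hm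
  have hcge : ∀ x ∈ Set.Icc (0:ℝ) xs, r - mu ≤ (lam + r) / pstar x - lam - mu := by
    intro x hx
    have hp := hpr x hx
    have h1 : lam + r ≤ (lam + r) / pstar x := by
      rw [le_div_iff₀ hp.1]
      nlinarith [hp.2]
    linarith
  -- the crucial HJB inequality
  have hstar : ∀ (t : ℝ), ∀ x ∈ Set.Icc (0:ℝ) xs,
      r * Vs x ≤ L (u t) +
        deriv Vs x * (((lam + r) / pstar x - lam - mu) * x - u t / pstar x) := by
    intro t x hx
    have h1 := hHJ x hx
    rw [Ham0] at h1
    have h2 : sInf ((fun ω => L ω - deriv Vs x / pstar x * ω) '' Set.Ico 0 1)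
        ≤ L (u t) - deriv Vs x / pstar x * u t := csInf_le (hBdd _) ⟨u t, hur t, rfl⟩
    have h3 : L (u t) + deriv Vs x * (((lam + r) / pstar x - lam - mu) * x - u t / pstar x)
        = (L (u t) - deriv Vs x / pstar x * u t)
          + ((lam + r) / pstar x - lam - mu) * x * deriv Vs x := by ring
    linarith
  -- Vs 0 = 0
  have hVs0 : Vs 0 = 0 := by
    have h1 := hHJ 0 ⟨le_refl 0, hxs.le⟩
    rw [Ham0] at h1
    have h2 := hsInf0 (deriv Vs 0 / pstar 0)
    have h3 := hVpos 0 ⟨le_refl 0, hxs.le⟩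
    nlinarith
  -- Vs is monotone, so bounded by B
  have hVmono : MonotoneOn Vs (Set.Icc 0 xs) := by
    refine monotoneOn_of_deriv_nonneg (convex_Icc 0 xs) hVc1.continuousOn
      ((hVc1.differentiableOn one_ne_zero).mono interior_subset) ?_
    intro x hx
    rw [interior_Icc] at hx
    have hx' : x ∈ Set.Icc (0:ℝ) xs := ⟨hx.1.le, hx.2.le⟩
    have h1 := hHJ x hx'
    rw [Ham0] at h1
    have h2 := hsInf0 (deriv Vs x / pstar x)
    have h3 := hcge x hx'
    have h4 := hVpos x hx'
    by_contra hneg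
    push_neg at hneg
    have h5 : ((lam + r) / pstar x - lam - mu) * x * deriv Vs x < 0 :=
      mul_neg_of_pos_of_neg (mul_pos (by linarith) hx.1) hneg
    nlinarith
  have hVleB : ∀ x ∈ Set.Icc (0:ℝ) xs, Vs x ≤ B := by
    intro x hx
    have := hVmono hx (Set.right_mem_Icc.mpr hxs.le) hx.2
    rwa [hVB] at this
  -- bounds on Vs and its derivative, and on pstar from below
  obtain ⟨Mv, hMv⟩ := isCompact_Icc.exists_bound_of_continuousOn hVc1.continuousOn
  obtain ⟨Md, hMd⟩ := isCompact_Icc.exists_bound_of_continuousOn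
    (hVc1.continuousOn_derivWithin (uniqueDiffOn_Icc hxs) le_rfl)
  obtain ⟨xm, hxm, hxmin⟩ := isCompact_Icc.exists_isMinOn (Set.nonempty_Icc.mpr hxs.le) hpc
  have hpm : 0 < pstar xm := (hpr xm hxm).1
  have hpmle : ∀ x ∈ Set.Icc (0:ℝ) xs, pstar xm ≤ pstar x := fun x hx => isMinOn_iff.mp hxmin x hx
  have hfnn : ∀ t : ℝ, 0 ≤ Real.exp (-r * t) * L (u t) := fun t =>
    mul_nonneg (Real.exp_pos _).le (hLnn _ (hur t))
  -- measurability of the integrand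
  have hLu : Measurable fun t => L (u t) := by
    have h1 : Measurable fun t => (⟨u t, hur t⟩ : Set.Ico (0:ℝ) 1) :=
      Measurable.subtype_mk hu
    exact (hL.continuousOn.restrict.measurable).comp h1
  have hfm : Measurable fun t => Real.exp (-r * t) * L (u t) :=
    ((Real.continuous_exp.comp (continuous_const.mul continuous_id)).measurable).mul hLu
  -- THE KEY LEMMA
  have hkey : ∀ T : ℝ, 0 ≤ T → ENNReal.ofReal T < Tb →
      MeasureTheory.IntegrableOn (fun t => Real.exp (-r * t) * L (u t)) (Set.Ioc 0 T) →
      Vs x0 ≤ (∫ t in Set.Ioc (0:ℝ) T, Real.exp (-r * t) * L (u t))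
        + Real.exp (-r * T) * B := by
    intro T hT0 hTlt hfi
    have hmem : ∀ t ∈ Set.Icc (0:ℝ) T, 0 ≤ t ∧ ENNReal.ofReal t < Tb := fun t ht =>
      ⟨ht.1, lt_of_le_of_lt (ENNReal.ofReal_le_ofReal ht.2) hTlt⟩
    have hXmem : ∀ t ∈ Set.Icc (0:ℝ) T, X t ∈ Set.Icc (0:ℝ) xs := fun t ht =>
      (hdyn t (hmem t ht).1 (hmem t ht).2).2
    have hXne : ∀ t ∈ Set.Icc (0:ℝ) T, X t ≠ xs := by
      intro t ht hxt
      have h1 : Tb ≤ ENNReal.ofReal t := hTb ▸ sInf_le ⟨t, ht.1, rfl, hxt⟩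
      exact absurd (hmem t ht).2 (not_lt.mpr h1)
    set d : ℝ → ℝ :=
      fun t => ((lam + r) / pstar (X t) - lam - mu) * X t - u t / pstar (X t) with hd
    have hXD : ∀ t ∈ Set.Icc (0:ℝ) T, HasDerivAt X (d t) t := fun t ht =>
      (hdyn t (hmem t ht).1 (hmem t ht).2).1
    have hXc : ContinuousOn X (Set.Icc 0 T) := fun t ht =>
      ((hXD t ht).continuousAt).continuousWithinAt
    have hdt : ∀ t : ℝ, d t = ((lam + r) / pstar (X t) - lam - mu) * X t
        - u t / pstar (X t) := fun t => by rw [hd]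
    -- if the trajectory touches 0 before T, its velocity vanishes there
    have hd0 : ∀ t ∈ Set.Ico (0:ℝ) T, X t = 0 → d t = 0 := by
      intro t ht hXz
      have hppos : 0 < pstar (X t) := (hpr (X t) (hXmem t ⟨ht.1, ht.2.le⟩)).1
      have hDle : d t ≤ 0 := by
        rw [hdt, hXz, mul_zero, zero_sub, neg_nonpos]
        rw [hXz] at hppos
        exact div_nonneg (hur t).1 hppos.le
      have hDge : 0 ≤ d t := by
        have hW : HasDerivWithinAt X (d t) (Set.Ioi t) t :=
          (hXD t ⟨ht.1, ht.2.le⟩).hasDerivWithinAt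
        rw [hasDerivWithinAt_iff_tendsto_slope' Set.notMem_Ioi_self] at hW
        refine ge_of_tendsto hW ?_
        have hmemT : Set.Iio T ∈ nhdsWithin t (Set.Ioi t) :=
          nhdsWithin_le_nhds (Iio_mem_nhds ht.2)
        filter_upwards [hmemT, self_mem_nhdsWithin] with s hs1 hs2
        have hts : t < s := hs2
        have hXs : 0 ≤ X s := (hXmem s ⟨ht.1.trans hts.le, le_of_lt hs1⟩).1
        rw [slope_def_field, hXz, sub_zero]
        exact div_nonneg hXs (by linarith)
      linarith
    -- Lipschitz-type bound for Vs near 0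
    have hVlip : ∀ y ∈ Set.Icc (0:ℝ) xs, Vs y ≤ Md * y := by
      intro y hy
      have h1 := Convex.norm_image_sub_le_of_norm_derivWithin_le
        (hVc1.differentiableOn one_ne_zero) (fun z hz => hMd z hz) (convex_Icc 0 xs)
        (Set.left_mem_Icc.mpr hxs.le) hy
      rw [hVs0, sub_zero, sub_zero, Real.norm_eq_abs, Real.norm_eq_abs,
        abs_of_nonneg hy.1] at h1
      exact (le_abs_self _).trans h1
    set g : ℝ → ℝ := fun s => Real.exp (-r * s) * Vs (X s) with hgdef
    set G : ℝ → ℝ := fun t => Real.exp (-r * t) *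
      (derivWithin Vs (Set.Icc 0 xs) (X t) * d t - r * Vs (X t)) with hGdef
    have hGt : ∀ t : ℝ, G t = Real.exp (-r * t) *
        (derivWithin Vs (Set.Icc 0 xs) (X t) * d t - r * Vs (X t)) := fun t => by rw [hGdef]
    have hgt : ∀ s : ℝ, g s = Real.exp (-r * s) * Vs (X s) := fun s => by rw [hgdef]
    have hexp : ∀ t : ℝ, HasDerivAt (fun s => Real.exp (-r * s)) (-r * Real.exp (-r * t)) t := by
      intro t
      have h1 : HasDerivAt (fun s : ℝ => -r * s) (-r) t := by
        simpa using (hasDerivAt_id t).const_mul (-r)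
      simpa [mul_comm] using h1.exp
    -- the one-sided derivative of g
    have hgd : ∀ t ∈ Set.Ioo (0:ℝ) T, HasDerivWithinAt g (G t) (Set.Ioi t) t := by
      intro t ht
      have ht' : t ∈ Set.Icc (0:ℝ) T := ⟨ht.1.le, ht.2.le⟩
      have hXt : X t ∈ Set.Icc (0:ℝ) xs := hXmem t ht'
      rcases eq_or_lt_of_le hXt.1 with hz | hposX
      · -- X t = 0
        have hXz : X t = 0 := hz.symm
        have hdz : d t = 0 := hd0 t ⟨ht.1.le, ht.2⟩ hXz
        have hGz : G t = 0 := by rw [hGt t, hdz, hXz, hVs0]; ring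
        rw [hGz, hasDerivWithinAt_iff_tendsto_slope' Set.notMem_Ioi_self]
        have hXslope : Tendsto (slope X t) (nhdsWithin t (Set.Ioi t)) (nhds 0) := by
          have h2 : HasDerivWithinAt X (d t) (Set.Ioi t) t :=
            (hXD t ht').hasDerivWithinAt
          rw [hasDerivWithinAt_iff_tendsto_slope' Set.notMem_Ioi_self, hdz] at h2
          exact h2
        have hbt : Tendsto (fun s => Real.exp (-r * s) * (Md * slope X t s))
            (nhdsWithin t (Set.Ioi t)) (nhds 0) := by
          have hc : Tendsto (fun s : ℝ => Real.exp (-r * s)) (nhdsWithin t (Set.Ioi t))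
              (nhds (Real.exp (-r * t))) :=
            ((Real.continuous_exp.comp (continuous_const.mul continuous_id)).tendsto t).mono_left
              nhdsWithin_le_nhds
          have h3 := hc.mul ((tendsto_const_nhds (x := Md)).mul hXslope)
          simpa using h3
        refine squeeze_zero_norm' ?_ hbt
        have hmemT : Set.Iio T ∈ nhdsWithin t (Set.Ioi t) :=
          nhdsWithin_le_nhds (Iio_mem_nhds ht.2)
        filter_upwards [hmemT, self_mem_nhdsWithin] with s hs1 hs2
        have hts : t < s := hs2
        have hsI : s ∈ Set.Icc (0:ℝ) T := ⟨ht.1.le.trans hts.le, le_of_lt hs1⟩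
        have hXs : X s ∈ Set.Icc (0:ℝ) xs := hXmem s hsI
        have hstpos : 0 < s - t := by linarith
        have hsl : slope g t s = Real.exp (-r * s) * Vs (X s) / (s - t) := by
          rw [slope_def_field, hgt s, hgt t, hXz, hVs0, mul_zero, sub_zero]
        have hslX : slope X t s = X s / (s - t) := by
          rw [slope_def_field, hXz, sub_zero]
        rw [hsl, hslX, Real.norm_eq_abs,
          abs_of_nonneg (div_nonneg (mul_nonneg (Real.exp_pos _).le (hVpos _ hXs)) hstpos.le)]
        have h9 : Real.exp (-r * s) * Vs (X s) ≤ Real.exp (-r * s) * (Md * X s) :=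
          mul_le_mul_of_nonneg_left (hVlip (X s) hXs) (Real.exp_pos _).le
        have h10 : Real.exp (-r * s) * (Md * (X s / (s - t)))
            = Real.exp (-r * s) * (Md * X s) / (s - t) := by ring
        rw [h10]
        gcongr
      · -- 0 < X t < xs : interior chain rule
        have hlt : X t < xs := lt_of_le_of_ne hXt.2 (hXne t ht')
        have hnhds : Set.Icc (0:ℝ) xs ∈ nhds (X t) := Icc_mem_nhds hposX hlt
        have hVd : HasDerivAt Vs (deriv Vs (X t)) (X t) :=
          ((hVc1.contDiffAt hnhds).differentiableAt one_ne_zero).hasDerivAt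
        have hcomp := hVd.comp t (hXD t ht')
        have hprod := (hexp t).mul hcomp
        have heq : derivWithin Vs (Set.Icc 0 xs) (X t) = deriv Vs (X t) :=
          derivWithin_of_mem_nhds hnhds
        refine HasDerivAt.hasDerivWithinAt ?_
        have h11 : G t = -r * Real.exp (-r * t) * Vs (X t)
            + Real.exp (-r * t) * (deriv Vs (X t) * d t) := by
          rw [hGt t, heq]; ring
        rw [h11]
        have h12 : (fun s => Real.exp (-r * s) * (Vs ∘ X) s) = g := by
          rw [hgdef]; rfl
        rw [← h12]
        exact hprod
    have hgc : ContinuousOn g (Set.Icc 0 T) := by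
      rw [hgdef]
      exact ((Real.continuous_exp.comp (continuous_const.mul continuous_id)).continuousOn).mul
        (hVc1.continuousOn.comp hXc (fun t ht => hXmem t ht))
    -- boundedness of G
    have hWb : ∀ t ∈ Set.Icc (0:ℝ) T, |derivWithin Vs (Set.Icc 0 xs) (X t)| ≤ Md :=
      fun t ht => hMd (X t) (hXmem t ht)
    set P := pstar xm with hP
    set Cd : ℝ := ((lam + r) / P + lam + mu) * xs + 1 / P with hCd
    have hdb : ∀ t ∈ Set.Icc (0:ℝ) T, |d t| ≤ Cd := by
      intro t ht
      have hXt := hXmem t ht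
      have hp := hpr (X t) hXt
      have hPle : P ≤ pstar (X t) := hpmle (X t) hXt
      have hc1 : 0 < (lam + r) / pstar (X t) := div_pos (by linarith) hp.1
      have hc2 : (lam + r) / pstar (X t) ≤ (lam + r) / P :=
        div_le_div₀ (by linarith) le_rfl hpm hPle
      have hPnn : 0 ≤ (lam + r) / P := le_trans hc1.le hc2
      have habsc : |(lam + r) / pstar (X t) - lam - mu| ≤ (lam + r) / P + lam + mu := by
        rw [abs_le]; constructor <;> linarith
      have hu1 : 0 ≤ u t / pstar (X t) := div_nonneg (hur t).1 hp.1.le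
      have hu2 : u t / pstar (X t) ≤ 1 / P := div_le_div₀ zero_le_one (hur t).2.le hpm hPle
      have hXa : |X t| ≤ xs := by rw [abs_of_nonneg hXt.1]; exact hXt.2
      have h13 : |((lam + r) / pstar (X t) - lam - mu) * X t|
          ≤ ((lam + r) / P + lam + mu) * xs := by
        rw [abs_mul]
        exact mul_le_mul habsc hXa (abs_nonneg _) (by linarith)
      have h14 : |d t| ≤ |((lam + r) / pstar (X t) - lam - mu) * X t|
          + |u t / pstar (X t)| := by
        rw [hdt]; exact abs_sub _ _
      have h15 : |u t / pstar (X t)| ≤ 1 / P := by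
        rw [abs_of_nonneg hu1]; exact hu2
      rw [hCd]; linarith
    have hCdnn : 0 ≤ Cd := le_trans (abs_nonneg _) (hdb 0 (Set.left_mem_Icc.mpr hT0))
    have hMdnn : 0 ≤ Md := le_trans (abs_nonneg _) (hWb 0 (Set.left_mem_Icc.mpr hT0))
    have hGb : ∀ t ∈ Set.Icc (0:ℝ) T, ‖G t‖ ≤ Md * Cd + r * Mv := by
      intro t ht
      have h1 : Real.exp (-r * t) ≤ 1 := Real.exp_le_one_iff.mpr (by nlinarith [ht.1])
      have h2 := hWb t ht
      have h3 := hdb t ht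
      have h4 : |Vs (X t)| ≤ Mv := hMv (X t) (hXmem t ht)
      have h5 : |derivWithin Vs (Set.Icc 0 xs) (X t) * d t| ≤ Md * Cd := by
        rw [abs_mul]; exact mul_le_mul h2 h3 (abs_nonneg _) hMdnn
      have h6 : |r * Vs (X t)| ≤ r * Mv := by
        rw [abs_mul, abs_of_pos hrpos]
        exact mul_le_mul_of_nonneg_left h4 hrpos.le
      rw [Real.norm_eq_abs, hGt t, abs_mul, abs_of_pos (Real.exp_pos _)]
      calc Real.exp (-r * t) * |derivWithin Vs (Set.Icc 0 xs) (X t) * d t - r * Vs (X t)|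
          ≤ 1 * |derivWithin Vs (Set.Icc 0 xs) (X t) * d t - r * Vs (X t)| := by
            apply mul_le_mul_of_nonneg_right h1 (abs_nonneg _)
        _ = |derivWithin Vs (Set.Icc 0 xs) (X t) * d t - r * Vs (X t)| := one_mul _
        _ ≤ |derivWithin Vs (Set.Icc 0 xs) (X t) * d t| + |r * Vs (X t)| := abs_sub _ _
        _ ≤ Md * Cd + r * Mv := add_le_add h5 h6
    -- measurability of G
    have hGm : AEStronglyMeasurable G (MeasureTheory.volume.restrict (Set.Icc (0:ℝ) T)) := by
      have hmb : MeasurableSet (Set.Icc (0:ℝ) T) := measurableSet_Icc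
      have hXm : AEStronglyMeasurable X (MeasureTheory.volume.restrict (Set.Icc (0:ℝ) T)) :=
        hXc.aestronglyMeasurable hmb
      have hWc : ContinuousOn (fun t => derivWithin Vs (Set.Icc 0 xs) (X t)) (Set.Icc 0 T) :=
        (hVc1.continuousOn_derivWithin (uniqueDiffOn_Icc hxs) le_rfl).comp hXc
          (fun t ht => hXmem t ht)
      have hVXc : ContinuousOn (fun t => Vs (X t)) (Set.Icc 0 T) :=
        hVc1.continuousOn.comp hXc (fun t ht => hXmem t ht)
      have hpXc : ContinuousOn (fun t => pstar (X t)) (Set.Icc 0 T) :=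
        hpc.comp hXc (fun t ht => hXmem t ht)
      have hec : Continuous (fun t : ℝ => Real.exp (-r * t)) :=
        Real.continuous_exp.comp (continuous_const.mul continuous_id)
      have hpiXc : ContinuousOn (fun t => (pstar (X t))⁻¹) (Set.Icc 0 T) :=
        hpXc.inv₀ (fun t ht => ((hpr (X t) (hXmem t ht)).1).ne')
      have hdm : AEStronglyMeasurable d (MeasureTheory.volume.restrict (Set.Icc (0:ℝ) T)) := by
        rw [hd]
        simp only [div_eq_mul_inv]
        refine AEStronglyMeasurable.sub ?_ ?_
        · refine AEStronglyMeasurable.mul ?_ hXm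
          refine AEStronglyMeasurable.sub (AEStronglyMeasurable.sub ?_
            aestronglyMeasurable_const) aestronglyMeasurable_const
          exact aestronglyMeasurable_const.mul (hpiXc.aestronglyMeasurable hmb)
        · exact (hu.aestronglyMeasurable).mul (hpiXc.aestronglyMeasurable hmb)
      rw [hGdef]
      refine AEStronglyMeasurable.mul (hec.continuousOn.aestronglyMeasurable hmb) ?_
      refine AEStronglyMeasurable.sub ?_ ?_
      · exact (hWc.aestronglyMeasurable hmb).mul hdm
      · exact aestronglyMeasurable_const.mul (hVXc.aestronglyMeasurable hmb)
    have hGi : IntervalIntegrable G MeasureTheory.volume 0 T := by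
      rw [intervalIntegrable_iff_integrableOn_Icc_of_le hT0]
      refine ⟨hGm, ?_⟩
      apply MeasureTheory.HasFiniteIntegral.restrict_of_bounded (C := Md * Cd + r * Mv)
        measure_Icc_lt_top
      filter_upwards [MeasureTheory.ae_restrict_mem measurableSet_Icc] with t ht
      exact hGb t ht
    -- fundamental theorem of calculus
    have hFTC := intervalIntegral.integral_eq_sub_of_hasDeriv_right_of_le hT0 hgc hgd hGi
    have hfi' : IntervalIntegrable (fun t => -(Real.exp (-r * t) * L (u t)))
        MeasureTheory.volume 0 T := by
      rw [intervalIntegrable_iff_integrableOn_Ioc_of_le hT0]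
      exact hfi.neg
    have haeT : ∀ᵐ t ∂(MeasureTheory.volume.restrict (Set.Icc (0:ℝ) T)), t ≠ T := by
      refine ae_restrict_of_ae ?_
      rw [MeasureTheory.ae_iff]
      have he : {a : ℝ | ¬ a ≠ T} = {T} := by ext a; simp
      rw [he]
      exact measure_singleton T
    have hae : (fun t => -(Real.exp (-r * t) * L (u t)))
        ≤ᵐ[MeasureTheory.volume.restrict (Set.Icc (0:ℝ) T)] G := by
      filter_upwards [haeT, MeasureTheory.ae_restrict_mem measurableSet_Icc] with t hne ht
      have ht' : t ∈ Set.Ico (0:ℝ) T := ⟨ht.1, lt_of_le_of_ne ht.2 hne⟩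
      have hXt : X t ∈ Set.Icc (0:ℝ) xs := hXmem t ht
      rcases eq_or_lt_of_le hXt.1 with hz | hposX
      · have hXz : X t = 0 := hz.symm
        have hdz : d t = 0 := hd0 t ht' hXz
        have hGz : G t = 0 := by rw [hGt t, hdz, hXz, hVs0]; ring
        simp only [hGz]
        simpa using neg_nonpos.mpr (hfnn t)
      · have hlt : X t < xs := lt_of_le_of_ne hXt.2 (hXne t ht)
        have hnhds : Set.Icc (0:ℝ) xs ∈ nhds (X t) := Icc_mem_nhds hposX hlt
        have heq : derivWithin Vs (Set.Icc 0 xs) (X t) = deriv Vs (X t) :=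
          derivWithin_of_mem_nhds hnhds
        have h5 := hstar t (X t) hXt
        have h6 : -(L (u t)) ≤ derivWithin Vs (Set.Icc 0 xs) (X t) * d t - r * Vs (X t) := by
          rw [heq, hdt]; linarith
        calc -(Real.exp (-r * t) * L (u t)) = Real.exp (-r * t) * (-(L (u t))) := by ring
          _ ≤ Real.exp (-r * t) * (derivWithin Vs (Set.Icc 0 xs) (X t) * d t - r * Vs (X t)) :=
            mul_le_mul_of_nonneg_left h6 (Real.exp_pos _).le
          _ = G t := (hGt t).symm
    have hmono := intervalIntegral.integral_mono_ae_restrict hT0 hfi' hGi hae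
    rw [hFTC, intervalIntegral.integral_neg, intervalIntegral.integral_of_le hT0] at hmono
    have hg0 : g 0 = Vs x0 := by rw [hgt 0, hX0]; simp
    have hgT : g T ≤ Real.exp (-r * T) * B := by
      rw [hgt T]
      exact mul_le_mul_of_nonneg_left (hVleB _ (hXmem T (Set.right_mem_Icc.mpr hT0)))
        (Real.exp_pos _).le
    linarith
  constructor
  · -- finite horizon case
    intro hTop
    set τ := Tb.toReal with hτ
    have hτpos : 0 < τ := ENNReal.toReal_pos hTb0.ne' hTop
    by_cases hI : (∫⁻ t in Set.Ioc (0:ℝ) τ, ENNReal.ofReal (Real.exp (-r * t) * L (u t))) = ⊤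
    · rw [hI]
      simp
    · have hInt : MeasureTheory.IntegrableOn (fun t => Real.exp (-r * t) * L (u t))
          (Set.Ioc 0 τ) := by
        refine ⟨hfm.aestronglyMeasurable, ?_⟩
        rw [MeasureTheory.hasFiniteIntegral_iff_ofReal (ae_of_all _ hfnn)]
        exact lt_top_iff_ne_top.mpr hI
      have hstep : ∀ T, 0 ≤ T → T < τ →
          Vs x0 ≤ (∫ t in Set.Ioc (0:ℝ) τ, Real.exp (-r * t) * L (u t))
            + Real.exp (-r * T) * B := by
        intro T hT0 hTτ
        have h1 : ENNReal.ofReal T < Tb :=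
          (ENNReal.ofReal_lt_iff_lt_toReal hT0 hTop).mpr hTτ
        have h2 := hkey T hT0 h1 (hInt.mono_set (Set.Ioc_subset_Ioc_right hTτ.le))
        have h3 : (∫ t in Set.Ioc (0:ℝ) T, Real.exp (-r * t) * L (u t))
            ≤ ∫ t in Set.Ioc (0:ℝ) τ, Real.exp (-r * t) * L (u t) :=
          setIntegral_mono_set hInt (ae_of_all _ hfnn)
            (Set.Ioc_subset_Ioc_right hTτ.le).eventuallyLE
        linarith
      have hlim : Vs x0 ≤ (∫ t in Set.Ioc (0:ℝ) τ, Real.exp (-r * t) * L (u t))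
          + Real.exp (-r * τ) * B := by
        have hne : (nhdsWithin τ (Set.Iio τ)).NeBot := nhdsLT_neBot τ
        have htend : Tendsto (fun T : ℝ =>
            (∫ t in Set.Ioc (0:ℝ) τ, Real.exp (-r * t) * L (u t)) + Real.exp (-r * T) * B)
            (nhdsWithin τ (Set.Iio τ))
            (nhds ((∫ t in Set.Ioc (0:ℝ) τ, Real.exp (-r * t) * L (u t))
              + Real.exp (-r * τ) * B)) := by
          refine tendsto_const_nhds.add ?_
          exact ((((Real.continuous_exp.comp
            (continuous_const.mul continuous_id)).tendsto τ).mono_left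
              nhdsWithin_le_nhds).mul_const B)
        refine ge_of_tendsto htend ?_
        filter_upwards [Ioo_mem_nhdsLT_of_mem (Set.mem_Ioc.mpr ⟨hτpos, le_refl τ⟩)] with T hT
        exact hstep T hT.1.le hT.2
      have h8 : ENNReal.ofReal (Vs x0) ≤
          ENNReal.ofReal ((∫ t in Set.Ioc (0:ℝ) τ, Real.exp (-r * t) * L (u t))
            + Real.exp (-r * τ) * B) := ENNReal.ofReal_le_ofReal hlim
      rw [ENNReal.ofReal_add (MeasureTheory.integral_nonneg hfnn)
        (mul_nonneg (Real.exp_pos _).le hB.le)] at h8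
      rwa [MeasureTheory.ofReal_integral_eq_lintegral_ofReal hInt (ae_of_all _ hfnn)] at h8
  · -- infinite horizon case
    intro hTop
    by_cases hI : (∫⁻ t in Set.Ioi (0:ℝ), ENNReal.ofReal (Real.exp (-r * t) * L (u t))) = ⊤
    · rw [hI]; exact le_top
    · have hInt : MeasureTheory.IntegrableOn (fun t => Real.exp (-r * t) * L (u t))
          (Set.Ioi 0) := by
        refine ⟨hfm.aestronglyMeasurable, ?_⟩
        rw [MeasureTheory.hasFiniteIntegral_iff_ofReal (ae_of_all _ hfnn)]
        exact lt_top_iff_ne_top.mpr hI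
      have hstep : ∀ T : ℝ, 0 ≤ T →
          Vs x0 ≤ (∫ t in Set.Ioi (0:ℝ), Real.exp (-r * t) * L (u t))
            + Real.exp (-r * T) * B := by
        intro T hT0
        have h1 : ENNReal.ofReal T < Tb := hTop ▸ ENNReal.ofReal_lt_top
        have h2 := hkey T hT0 h1 (hInt.mono_set Set.Ioc_subset_Ioi_self)
        have h3 : (∫ t in Set.Ioc (0:ℝ) T, Real.exp (-r * t) * L (u t))
            ≤ ∫ t in Set.Ioi (0:ℝ), Real.exp (-r * t) * L (u t) :=
          setIntegral_mono_set hInt (ae_of_all _ hfnn)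
            (Set.Ioc_subset_Ioi_self).eventuallyLE
        linarith
      have hlim : Vs x0 ≤ ∫ t in Set.Ioi (0:ℝ), Real.exp (-r * t) * L (u t) := by
        have hexp0 : Tendsto (fun T : ℝ => Real.exp (-r * T)) atTop (nhds 0) := by
          have h4 : Tendsto (fun T : ℝ => r * T) atTop atTop :=
            Tendsto.const_mul_atTop hrpos tendsto_id
          have h5 := Real.tendsto_exp_neg_atTop_nhds_zero.comp h4
          exact Filter.Tendsto.congr (fun T => by simp [Function.comp, neg_mul]) h5
        have htend : Tendsto (fun T : ℝ =>
            (∫ t in Set.Ioi (0:ℝ), Real.exp (-r * t) * L (u t)) + Real.exp (-r * T) * B)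
            atTop (nhds ((∫ t in Set.Ioi (0:ℝ), Real.exp (-r * t) * L (u t)) + 0)) := by
          refine tendsto_const_nhds.add ?_
          simpa using hexp0.mul_const B
        have h6 := ge_of_tendsto htend (eventually_atTop.mpr ⟨0, fun T hT => hstep T hT⟩)
        simpa using h6
      calc ENNReal.ofReal (Vs x0)
          ≤ ENNReal.ofReal (∫ t in Set.Ioi (0:ℝ), Real.exp (-r * t) * L (u t)) :=
            ENNReal.ofReal_le_ofReal hlim
        _ = ∫⁻ t in Set.Ioi (0:ℝ), ENNReal.ofReal (Real.exp (-r * t) * L (u t)) :=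
            MeasureTheory.ofReal_integral_eq_lintegral_ofReal hInt (ae_of_all _ hfnn)
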